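/- Let n > 2 and let K_N be a diagonal positive definite n×n matrix. Then (K_N^{-1} + Iₙ)^{-1} admits a decomposition Q · diag(γI_{n-2}, S) · Qᵀ with Q orthonormal whose last column is (1/√n)1ₙ and S = [[γ, v],[v, a]] (for some γ, a ∈ (0,1), v ∈ ℝ with v² < min{aγ, (1-a)(1-γ)}) if and only if K_N = c·Iₙ for some constant c > 0. -/

import Mathlib

open Matrix


lemma householder_exists (m : ℕ) :
    ∃ Q : Matrix (Fin (m + 2)) (Fin (m + 2)) ℝ,
      Qᵀ * Q = 1 ∧ ∀ i, Q i (Fin.last (m + 1)) = (Real.sqrt (m + 2))⁻¹ := by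
  set n : ℕ := m + 2 with hn
  set c : ℝ := (Real.sqrt n)⁻¹ with hc
  have hnpos : (0:ℝ) < n := by positivity
  have hs1 : (1:ℝ) < Real.sqrt n := by
    rw [show (1:ℝ) = Real.sqrt 1 by simp]
    exact Real.sqrt_lt_sqrt (by norm_num) (by exact_mod_cast by omega)
  have hc0 : 0 < c := by positivity
  have hc1 : c < 1 := by
    rw [hc, inv_lt_one_iff₀]; right; exact hs1
  have hcsq : (n:ℝ) * (c * c) = 1 := by
    rw [hc, ← mul_inv]
    rw [← Real.sqrt_mul_self (le_of_lt (by positivity : (0:ℝ) < (n:ℝ)))]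
    field_simp
    rw [Real.sq_sqrt (Real.sqrt_nonneg _)]
  have hceq : (Real.sqrt ((m:ℝ) + 2))⁻¹ = c := by
    have : ((n:ℝ)) = (m:ℝ) + 2 := by rw [hn]; push_cast; ring
    rw [hc, this]
  set w : Fin n → ℝ := fun i => (if i = Fin.last (m+1) then (1:ℝ) else 0) - c with hw
  have hwlast : w (Fin.last (m+1)) = 1 - c := by simp [hw]
  set s : ℝ := 2 - 2 * c with hsdef
  have hspos : 0 < s := by rw [hsdef]; nlinarith
  have hsum : ∑ i, w i * w i = s := by
    have h1 : ∀ i, w i * w i = c * c + (if i = Fin.last (m+1) then 1 - 2*c else 0) := by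
      intro i
      by_cases h : i = Fin.last (m+1) <;> simp [hw, h] <;> ring
    rw [Finset.sum_congr rfl (fun i _ => h1 i)]
    rw [Finset.sum_add_distrib, Finset.sum_const, Finset.sum_ite_eq' Finset.univ (Fin.last (m+1))]
    simp only [Finset.mem_univ, if_true, Finset.card_univ, Fintype.card_fin, nsmul_eq_mul]
    rw [show ((m+2 : ℕ) : ℝ) = (n:ℝ) by norm_cast]
    rw [hcsq]; ring
  set t : ℝ := 2 / s with ht
  have hts : t * t * s = 2 * t := by
    rw [ht]; field_simp
  have htw : t * w (Fin.last (m+1)) = 1 := by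
    rw [hwlast, ht, hsdef]; field_simp
    have h1c : (1:ℝ) - c ≠ 0 := by linarith
    exact div_self h1c
  set Q : Matrix (Fin n) (Fin n) ℝ := fun i j => (if i = j then (1:ℝ) else 0) - t * (w i * w j)
    with hQ
  have hQapp : ∀ i j, Q i j = (if i = j then (1:ℝ) else 0) - t * (w i * w j) := by
    intro i j; rw [hQ]
  clear_value Q t s w c
  refine ⟨Q, ?_, ?_⟩
  · ext j k
    rw [Matrix.mul_apply]
    have expand : ∀ i : Fin n, Qᵀ j i * Q i k =
        ((if i = j then (1:ℝ) else 0) * (if i = k then (1:ℝ) else 0)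
        - t * ((if i = j then (1:ℝ) else 0) * (w i * w k))
        - t * ((if i = k then (1:ℝ) else 0) * (w i * w j)))
        + (t * t) * ((w i * w i) * (w j * w k)) := by
      intro i; rw [Matrix.transpose_apply, hQapp, hQapp]; ring
    rw [Finset.sum_congr rfl (fun i _ => expand i)]
    rw [Finset.sum_add_distrib, Finset.sum_sub_distrib, Finset.sum_sub_distrib,
      ← Finset.mul_sum, ← Finset.mul_sum, ← Finset.mul_sum]
    have S1 : ∑ i : Fin n, (if i = j then (1:ℝ) else 0) * (if i = k then (1:ℝ) else 0)
        = if j = k then (1:ℝ) else 0 := by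
      by_cases h : j = k
      · simp [ite_mul, Finset.sum_ite_eq', h]
      · simp [ite_mul, Finset.sum_ite_eq', h, Ne.symm h]
    have S2 : ∑ i : Fin n, (if i = j then (1:ℝ) else 0) * (w i * w k) = w j * w k := by
      simp [ite_mul, Finset.sum_ite_eq']
    have S3 : ∑ i : Fin n, (if i = k then (1:ℝ) else 0) * (w i * w j) = w k * w j := by
      simp [ite_mul, Finset.sum_ite_eq']
    have S4 : ∑ i : Fin n, (w i * w i) * (w j * w k) = s * (w j * w k) := by
      rw [← Finset.sum_mul, hsum]
    rw [S1, S2, S3, S4, Matrix.one_apply]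
    linear_combination (w j * w k) * hts
  · intro i
    rw [hQapp, hceq, mul_comm (w i), ← mul_assoc, htw, one_mul, hw]
    ring

lemma diagonal_inv_ne {k : ℕ} (d : Fin k → ℝ) (h : ∀ i, d i ≠ 0) :
    (Matrix.diagonal d)⁻¹ = Matrix.diagonal fun i => (d i)⁻¹ :=
  Matrix.inv_eq_right_inv (by
    rw [Matrix.diagonal_mul_diagonal]
    have : (fun i => d i * (d i)⁻¹) = fun _ : Fin k => (1:ℝ) := funext fun i => mul_inv_cancel₀ (h i)
    rw [this, Matrix.diagonal_one])

lemma diag_M_eq {k : ℕ} (d : Fin k → ℝ) (h : ∀ i, 0 < d i) :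
    ((Matrix.diagonal d)⁻¹ + 1)⁻¹ = Matrix.diagonal fun i => ((d i)⁻¹ + 1)⁻¹ := by
  rw [diagonal_inv_ne d (fun i => (h i).ne'), ← Matrix.diagonal_one, Matrix.diagonal_add,
    diagonal_inv_ne]
  intro i
  have := h i
  positivity



/-- For `n = m + 2 > 2` and `K_N` diagonal positive definite, the matrix
`(K_N⁻¹ + Iₙ)⁻¹` admits a decomposition `Q · diag(γ I_{n-2}, S) · Qᵀ` with `Q`
orthonormal having last column `(1/√n)·1ₙ` and `S = [[γ,v],[v,a]]` (with
`γ, a ∈ (0,1)`, `v² < min{aγ, (1-a)(1-γ)}`) if and only if `K_N = c·Iₙ`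
for some `c > 0`. -/
theorem diagonal_linear_iff_isotropic (m : ℕ) (hm : 1 ≤ m)
    (K : Matrix (Fin (m + 2)) (Fin (m + 2)) ℝ)
    (hdiag : K.IsDiag) (hpd : K.PosDef) :
    (∃ (Q : Matrix (Fin (m + 2)) (Fin (m + 2)) ℝ) (γ a v : ℝ),
        Qᵀ * Q = 1 ∧
        (∀ i, Q i (Fin.last (m + 1)) = (Real.sqrt (m + 2))⁻¹) ∧
        0 < γ ∧ γ < 1 ∧ 0 < a ∧ a < 1 ∧
        v ^ 2 < min (a * γ) ((1 - a) * (1 - γ)) ∧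
        (K⁻¹ + 1)⁻¹ =
          Q * (Matrix.reindex finSumFinEquiv finSumFinEquiv
            (Matrix.fromBlocks (γ • (1 : Matrix (Fin m) (Fin m) ℝ)) 0 0
              !![γ, v; v, a])) * Qᵀ)
      ↔ ∃ c : ℝ, 0 < c ∧ K = c • (1 : Matrix (Fin (m + 2)) (Fin (m + 2)) ℝ) := by
  have hcne : ((Real.sqrt ((m:ℝ) + 2)))⁻¹ ≠ 0 := by positivity
  obtain ⟨d, hKd, hdpos⟩ : ∃ d, K = Matrix.diagonal d ∧ ∀ i, 0 < d i := by
    refine ⟨K.diag, hdiag.diagonal_diag.symm, ?_⟩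
    rw [← hdiag.diagonal_diag] at hpd
    exact Matrix.posDef_diagonal_iff.mp hpd
  have hMd : (K⁻¹ + 1)⁻¹ = Matrix.diagonal fun i => ((d i)⁻¹ + 1)⁻¹ := by
    rw [hKd]; exact diag_M_eq d hdpos
  set μ : Fin (m + 2) → ℝ := fun i => ((d i)⁻¹ + 1)⁻¹ with hμ
  constructor
  · rintro ⟨Q, γ, a, v, hQ, hQlast, hγ0, hγ1, ha0, ha1, hv, hM⟩
    have hMQ : Matrix.diagonal μ * Q =
        Q * (Matrix.reindex finSumFinEquiv finSumFinEquiv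
          (Matrix.fromBlocks (γ • (1 : Matrix (Fin m) (Fin m) ℝ)) 0 0 !![γ, v; v, a])) := by
      rw [← hMd, hM, Matrix.mul_assoc, hQ, Matrix.mul_one]
    have hent : ∀ (i : Fin (m + 2)) (sk : Fin m ⊕ Fin 2),
        μ i * Q i (finSumFinEquiv sk) =
        ∑ sj : Fin m ⊕ Fin 2, Q i (finSumFinEquiv sj) *
          (Matrix.fromBlocks (γ • (1 : Matrix (Fin m) (Fin m) ℝ)) 0 0 !![γ, v; v, a]) sj sk := by
      intro i sk
      have h := congrFun (congrFun hMQ i) (finSumFinEquiv sk)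
      rw [Matrix.mul_apply, Matrix.mul_apply] at h
      simp only [Matrix.diagonal_apply, ite_mul, zero_mul, Finset.sum_ite_eq,
        Finset.mem_univ, if_true] at h
      rw [← Equiv.sum_comp finSumFinEquiv
        (fun j => Q i j * (Matrix.reindex finSumFinEquiv finSumFinEquiv
          (Matrix.fromBlocks (γ • (1 : Matrix (Fin m) (Fin m) ℝ)) 0 0 !![γ, v; v, a])) j
            (finSumFinEquiv sk))] at h
      simpa only [Matrix.reindex_apply, Matrix.submatrix_apply, Equiv.symm_apply_apply] using h
    have hplast : (finSumFinEquiv (Sum.inr (1 : Fin 2)) : Fin (m + 2)) = Fin.last (m + 1) := by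
      apply Fin.ext
      simp [finSumFinEquiv_apply_right]
    set j0 : Fin m := ⟨0, hm⟩ with hj0
    set p : Fin (m + 2) := finSumFinEquiv (Sum.inr (0 : Fin 2)) with hp
    have eq0 : ∀ i, μ i * Q i (finSumFinEquiv (Sum.inl j0)) =
        γ * Q i (finSumFinEquiv (Sum.inl j0)) := by
      intro i
      have h := hent i (Sum.inl j0)
      simp only [Fintype.sum_sum_type, Matrix.fromBlocks_apply₁₁, Matrix.fromBlocks_apply₂₁,
        Matrix.smul_apply, Matrix.one_apply, smul_eq_mul, mul_ite, mul_one, mul_zero,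
        Matrix.zero_apply, Finset.sum_const_zero, add_zero, Finset.sum_ite_eq',
        Finset.mem_univ, if_true] at h
      rw [h]; ring
    have eqp : ∀ i, μ i * Q i p =
        γ * Q i p + v * Q i (Fin.last (m + 1)) := by
      intro i
      have h := hent i (Sum.inr 0)
      simp only [Fintype.sum_sum_type, Matrix.fromBlocks_apply₁₂, Matrix.fromBlocks_apply₂₂,
        Matrix.zero_apply, mul_zero, Finset.sum_const_zero, zero_add,
        Fin.sum_univ_two] at h
      rw [hplast, show !![γ, v; v, a] 0 0 = γ from rfl,
        show !![γ, v; v, a] 1 0 = v from rfl] at h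
      rw [hp]
      linear_combination h
    have eqlast : ∀ i, μ i * Q i (Fin.last (m + 1)) =
        v * Q i p + a * Q i (Fin.last (m + 1)) := by
      intro i
      have h := hent i (Sum.inr 1)
      simp only [Fintype.sum_sum_type, Matrix.fromBlocks_apply₁₂, Matrix.fromBlocks_apply₂₂,
        Matrix.zero_apply, mul_zero, Finset.sum_const_zero, zero_add,
        Fin.sum_univ_two] at h
      rw [hplast, show !![γ, v; v, a] 0 1 = v from rfl,
        show !![γ, v; v, a] 1 1 = a from rfl] at h
      rw [hp]
      linear_combination h
    by_cases hv0 : v = 0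
    · -- all μ i = a, so d i = a/(1-a)
      have hμa : ∀ i, μ i = a := by
        intro i
        have h := eqlast i
        rw [hv0, hQlast i] at h
        have h2 : (μ i - a) * (Real.sqrt ((m:ℝ) + 2))⁻¹ = 0 := by
          push_cast at h ⊢
          linarith [h]
        rcases mul_eq_zero.mp h2 with h3 | h3
        · linarith [h3]
        · exact absurd h3 hcne
      have hda : ∀ i, d i = a / (1 - a) := by
        intro i
        have h := hμa i
        have hdi := hdpos i
        have hdx : d i ≠ 0 := ne_of_gt hdi
        have hx : (d i)⁻¹ + 1 ≠ 0 := by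
          have h0 : 0 < (d i)⁻¹ + 1 := by positivity
          linarith
        have h2 : a * ((d i)⁻¹ + 1) = 1 := by
          rw [← h, hμ]
          exact inv_mul_cancel₀ hx
        rw [eq_div_iff (by linarith : (1:ℝ) - a ≠ 0)]
        field_simp at h2
        linarith
      refine ⟨a / (1 - a), div_pos ha0 (by linarith), ?_⟩
      rw [hKd]
      ext i j
      by_cases h : i = j <;>
        simp [Matrix.diagonal_apply, Matrix.one_apply, h, hda]
    · exfalso
      have hμγ : ∀ i, μ i ≠ γ := by
        intro i hiγ
        have h := eqp i
        rw [hiγ, hQlast i] at h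
        apply hv0
        have h2 : v * (Real.sqrt ((m:ℝ) + 2))⁻¹ = 0 := by push_cast at h ⊢; linarith
        rcases mul_eq_zero.mp h2 with h3 | h3
        · exact h3
        · exact absurd h3 hcne
      have hQ0 : ∀ i, Q i (finSumFinEquiv (Sum.inl j0)) = 0 := by
        intro i
        have h := eq0 i
        have h2 : (μ i - γ) * Q i (finSumFinEquiv (Sum.inl j0)) = 0 := by linarith
        rcases mul_eq_zero.mp h2 with h3 | h3
        · exact absurd (by linarith : μ i = γ) (hμγ i)
        · exact h3
      have h1 := congrFun (congrFun hQ (finSumFinEquiv (Sum.inl j0))) (finSumFinEquiv (Sum.inl j0))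
      rw [Matrix.mul_apply] at h1
      simp only [Matrix.transpose_apply, hQ0, mul_zero, Finset.sum_const_zero,
        Matrix.one_apply_eq] at h1
      exact zero_ne_one h1
  · rintro ⟨c, hc, hKc⟩
    obtain ⟨Q, hQ, hQlast⟩ := householder_exists m
    set γ : ℝ := (c⁻¹ + 1)⁻¹ with hγ
    have hci : 0 < c⁻¹ := by positivity
    have hγ0 : 0 < γ := by positivity
    have hγ1 : γ < 1 := by
      rw [hγ, inv_lt_one_iff₀]; right; linarith
    refine ⟨Q, γ, γ, 0, hQ, hQlast, hγ0, hγ1, hγ0, hγ1, ?_, ?_⟩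
    · rw [lt_min_iff]
      constructor
      · nlinarith
      · nlinarith
    · have hB : (Matrix.reindex finSumFinEquiv finSumFinEquiv
          (Matrix.fromBlocks (γ • (1 : Matrix (Fin m) (Fin m) ℝ)) 0 0
            !![γ, (0:ℝ); 0, γ])) = γ • (1 : Matrix (Fin (m+2)) (Fin (m+2)) ℝ) := by
        have h2 : !![γ, (0:ℝ); 0, γ] = γ • (1 : Matrix (Fin 2) (Fin 2) ℝ) := by
          ext i j
          fin_cases i <;> fin_cases j <;> simp [Matrix.one_apply]
        rw [h2, show (0 : Matrix (Fin m) (Fin 2) ℝ) = γ • 0 from (smul_zero γ).symm,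
          show (0 : Matrix (Fin 2) (Fin m) ℝ) = γ • 0 from (smul_zero γ).symm,
          ← Matrix.fromBlocks_smul, Matrix.fromBlocks_one]
        simp [Matrix.reindex_apply, Matrix.submatrix_smul, Matrix.submatrix_one_equiv]
      rw [hB]
      have hKdiagc : K = Matrix.diagonal (fun _ : Fin (m+2) => c) := by
        rw [hKc]
        ext i j
        by_cases h : i = j <;> simp [Matrix.diagonal_apply, Matrix.one_apply, h]
      rw [hKdiagc, diag_M_eq _ (fun _ => hc)]
      have hQQt : Q * Qᵀ = 1 := mul_eq_one_comm.mp hQ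
      rw [mul_smul_comm, Matrix.mul_one, Matrix.smul_mul, hQQt]
      ext i j
      by_cases h : i = j <;> simp [Matrix.diagonal_apply, Matrix.one_apply, h, hγ]
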